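/- arXiv:2406.04981 — 2 statements merged into one kernel-verified Lean document; each statement's English description precedes it below -/
import Mathlib

section
/- (Duality lemma for the worst-case exponential loss) Let L̃(w) = Σ_{i=1}^m exp(−y_i⟨w, x_i⟩ + ε‖w‖_{p*}) and let γ̃ = max_{w ≠ 0} min_i min_{‖x'_i − x_i‖_p ≤ ε} y_i⟨w, x'_i⟩ / ‖w‖_r be the maximum worst-case ℓ_r margin, assumed positive. Then for any w ∈ ℝ^d and any subgradient g ∈ ∂L̃(w), it holds that γ̃ · L̃(w) ≤ ‖g‖_{r*}, where r* is the Hölder conjugate of r. -/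
noncomputable def lpNorm {d : ℕ} (p : ℝ) (w : Fin d → ℝ) : ℝ :=
  (∑ j, |w j| ^ p) ^ (1 / p)

def dotp {d : ℕ} (w x : Fin d → ℝ) : ℝ := ∑ j, w j * x j

open Finset Real

/- auxiliary lemmas -/

lemma lpNorm_nonneg' {d : ℕ} (p : ℝ) (w : Fin d → ℝ) : 0 ≤ lpNorm p w :=
  Real.rpow_nonneg (Finset.sum_nonneg fun j _ => Real.rpow_nonneg (abs_nonneg _) _) _

lemma lpNorm_neg' {d : ℕ} (p : ℝ) (w : Fin d → ℝ) : lpNorm p (-w) = lpNorm p w := by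
  unfold lpNorm; simp

lemma lpNorm_smul' {d : ℕ} {p : ℝ} (hp : 0 < p) (c : ℝ) (w : Fin d → ℝ) :
    lpNorm p (c • w) = |c| * lpNorm p w := by
  unfold lpNorm
  have h1 : ∀ j, |(c • w) j| ^ p = |c| ^ p * |w j| ^ p := fun j => by
    simp only [Pi.smul_apply, smul_eq_mul, abs_mul]
    exact Real.mul_rpow (abs_nonneg c) (abs_nonneg (w j))
  simp_rw [h1, ← Finset.mul_sum]
  rw [Real.mul_rpow (Real.rpow_nonneg (abs_nonneg c) p)
      (Finset.sum_nonneg fun j _ => Real.rpow_nonneg (abs_nonneg _) _),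
    ← Real.rpow_mul (abs_nonneg c), mul_one_div_cancel hp.ne', Real.rpow_one]

lemma lpNorm_pos' {d : ℕ} {p : ℝ} (hp : 0 < p) {w : Fin d → ℝ} (hw : w ≠ 0) :
    0 < lpNorm p w := by
  obtain ⟨j0, hj0⟩ := Function.ne_iff.1 hw
  have hj0' : (0:ℝ) < |w j0| ^ p := Real.rpow_pos_of_pos (abs_pos.2 hj0) p
  have hsum : (0:ℝ) < ∑ j, |w j| ^ p :=
    lt_of_lt_of_le hj0' (Finset.single_le_sum (fun j _ => Real.rpow_nonneg (abs_nonneg _) p)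
      (Finset.mem_univ j0))
  exact Real.rpow_pos_of_pos hsum _

lemma lpNorm_add_le' {d : ℕ} {p : ℝ} (hp : 1 ≤ p) (a b : Fin d → ℝ) :
    lpNorm p (a + b) ≤ lpNorm p a + lpNorm p b := by
  unfold lpNorm
  simpa using Real.Lp_add_le Finset.univ a b hp

lemma dotp_le_lpNorm {d : ℕ} {p q : ℝ} (hpq : p.HolderConjugate q) (w v : Fin d → ℝ) :
    dotp w v ≤ lpNorm p w * lpNorm q v :=
  Real.inner_le_Lp_mul_Lq Finset.univ w v hpq

lemma abs_dotp_le_lpNorm {d : ℕ} {p q : ℝ} (hpq : p.HolderConjugate q) (w v : Fin d → ℝ) :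
    |dotp w v| ≤ lpNorm p w * lpNorm q v := by
  rw [abs_le]
  constructor
  · have h := dotp_le_lpNorm hpq (-w) v
    have : dotp (-w) v = -dotp w v := by simp [dotp]
    rw [this, lpNorm_neg'] at h
    linarith
  · exact dotp_le_lpNorm hpq w v

lemma dotp_sub_right {d : ℕ} (w a b : Fin d → ℝ) :
    dotp w (a - b) = dotp w a - dotp w b := by
  simp [dotp, mul_sub, Finset.sum_sub_distrib]

lemma dotp_smul_right {d : ℕ} (w : Fin d → ℝ) (c : ℝ) (v : Fin d → ℝ) :
    dotp w (c • v) = c * dotp w v := by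
  simp only [dotp, Finset.mul_sum, Pi.smul_apply, smul_eq_mul]
  exact Finset.sum_congr rfl fun j _ => by ring

lemma dotp_add_left {d : ℕ} (a b v : Fin d → ℝ) :
    dotp (a + b) v = dotp a v + dotp b v := by
  simp [dotp, add_mul, Finset.sum_add_distrib]

lemma dotp_smul_left {d : ℕ} (c : ℝ) (a v : Fin d → ℝ) :
    dotp (c • a) v = c * dotp a v := by
  simp only [dotp, Finset.mul_sum, Pi.smul_apply, smul_eq_mul]
  exact Finset.sum_congr rfl fun j _ => by ring

lemma exp_neg_quad (x : ℝ) (h0 : 0 ≤ x) (h1 : x ≤ 1) :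
    Real.exp (-x) ≤ 1 - x + x ^ 2 := by
  have hx : |(-x)| ≤ 1 := by rwa [abs_neg, abs_of_nonneg h0]
  have h := Real.exp_bound hx (n := 2) (by norm_num)
  have hsum : ∑ m ∈ Finset.range 2, (-x) ^ m / (m.factorial : ℝ) = 1 - x := by
    simp [Finset.sum_range_succ]
    ring
  rw [hsum] at h
  have h2 : |(-x)| ^ 2 * ((2+1 : ℕ) / ((2:ℕ).factorial * (2:ℕ)) : ℝ) = x ^ 2 * (3/4) := by
    rw [abs_neg, abs_of_nonneg h0]; norm_num
  rw [h2] at h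
  have := (abs_sub_le_iff.1 h).1
  nlinarith [sq_nonneg x]

/-- Duality lemma: if `γ̃` is the maximum worst-case `ℓ_r` margin (positive),
then for every `w` and every subgradient `g` of the worst-case exponential
loss at `w`, `γ̃ · L̃(w) ≤ ‖g‖_{r*}`. -/
theorem duality_lemma {d m : ℕ} (hm : 0 < m)
    (p q r rc : ℝ) (hpq : p.HolderConjugate q) (hr : r.HolderConjugate rc)
    (xs : Fin m → Fin d → ℝ) (ys : Fin m → ℝ) (hy : ∀ i, ys i = 1 ∨ ys i = -1)
    (ε : ℝ) (hε : 0 ≤ ε)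
    (L : (Fin d → ℝ) → ℝ)
    (hL : ∀ w, L w = ∑ i, Real.exp (-(ys i * dotp w (xs i)) + ε * lpNorm q w))
    (γ : ℝ) (hγpos : 0 < γ)
    (hγ : IsGreatest {g : ℝ | ∃ w : Fin d → ℝ, w ≠ 0 ∧
        g = sInf {v : ℝ | ∃ i : Fin m, ∃ x' : Fin d → ℝ,
          lpNorm p (x' - xs i) ≤ ε ∧ v = ys i * dotp w x' / lpNorm r w}} γ)
    (w g : Fin d → ℝ)
    (hg : ∀ z, L w + dotp g (z - w) ≤ L z) :
    γ * L w ≤ lpNorm rc g := by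
  obtain ⟨ws, hws, hγeq⟩ := hγ.1
  set R : ℝ := lpNorm r ws with hR
  have hRpos : 0 < R := lpNorm_pos' hr.pos hws
  set Nq : ℝ := lpNorm q ws with hNq
  have hNqpos : 0 < Nq := lpNorm_pos' hpq.symm.pos hws
  -- the set whose infimum is γ
  set S : Set ℝ := {v : ℝ | ∃ i : Fin m, ∃ x' : Fin d → ℝ,
      lpNorm p (x' - xs i) ≤ ε ∧ v = ys i * dotp ws x' / lpNorm r ws} with hS
  -- S is bounded below
  have hne : (Finset.univ : Finset (Fin m)).Nonempty := by
    exact Finset.univ_nonempty_iff.2 (Fin.pos_iff_nonempty.mp hm)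
  have hBdd : BddBelow S := by
    refine ⟨(Finset.univ.inf' hne fun i => (ys i * dotp ws (xs i) - Nq * ε) / R), ?_⟩
    rintro v ⟨i, x', hx', rfl⟩
    have habs : |dotp ws (x' - xs i)| ≤ Nq * ε := by
      have h1 := abs_dotp_le_lpNorm hpq.symm ws (x' - xs i)
      have h2 : lpNorm q ws * lpNorm p (x' - xs i) ≤ Nq * ε :=
        mul_le_mul_of_nonneg_left hx' hNqpos.le
      linarith
    have hyabs : |ys i| = 1 := by rcases hy i with h | h <;> simp [h]
    have key : ys i * dotp ws (xs i) - Nq * ε ≤ ys i * dotp ws x' := by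
      have : ys i * dotp ws x' - ys i * dotp ws (xs i) = ys i * dotp ws (x' - xs i) := by
        rw [dotp_sub_right]; ring
      have hb : |ys i * dotp ws (x' - xs i)| ≤ Nq * ε := by
        rw [abs_mul, hyabs, one_mul]; exact habs
      have := neg_abs_le (ys i * dotp ws (x' - xs i))
      linarith
    calc Finset.univ.inf' hne (fun i => (ys i * dotp ws (xs i) - Nq * ε) / R)
        ≤ (ys i * dotp ws (xs i) - Nq * ε) / R := Finset.inf'_le _ (Finset.mem_univ i)
      _ ≤ ys i * dotp ws x' / lpNorm r ws := by
          rw [← hR]; exact (div_le_div_iff_of_pos_right hRpos).2 key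
  -- the margin property: for each i
  have hmargin : ∀ i : Fin m, -(ys i * dotp ws (xs i)) + ε * Nq ≤ -(γ * R) := by
    intro i
    -- construct the dual certificate
    set s : Fin d → ℝ := fun j => Real.sign (ws j) * |ws j| ^ (q - 1) with hs
    set Sq : ℝ := ∑ j, |ws j| ^ q with hSq
    have hq1 : 1 < q := hpq.symm.lt
    have hA : ∀ j, ws j * s j = |ws j| ^ q := by
      intro j
      rcases lt_trichotomy (ws j) 0 with h | h | h
      · have hpos : (0:ℝ) < -(ws j) := by linarith
        have h1 : (-(ws j)) * (-(ws j)) ^ (q-1) = (-(ws j)) ^ q := by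
          have h2 := Real.rpow_add hpos 1 (q-1)
          rw [Real.rpow_one] at h2
          rw [← h2]; norm_num
        rw [hs]
        simp only [Real.sign_of_neg h, abs_of_neg h]
        linear_combination h1
      · simp [hs, h, Real.zero_rpow (by linarith : q ≠ 0)]
      · have h1 : (ws j) * (ws j) ^ (q-1) = (ws j) ^ q := by
          have h2 := Real.rpow_add h 1 (q-1)
          rw [Real.rpow_one] at h2
          rw [← h2]; norm_num
        rw [hs]
        simp only [Real.sign_of_pos h, abs_of_pos h, one_mul]
        linear_combination h1
    have hB : ∀ j, |s j| ^ p = |ws j| ^ q := by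
      intro j
      rcases eq_or_ne (ws j) 0 with h | h
      · rw [hs]
        simp [h, Real.zero_rpow (by linarith : q - 1 ≠ 0),
          Real.zero_rpow hpq.ne_zero, Real.zero_rpow (by linarith : q ≠ 0)]
      · have hsabs : |s j| = |ws j| ^ (q - 1) := by
          rw [hs]
          simp only [abs_mul, abs_abs]
          rw [abs_of_nonneg (Real.rpow_nonneg (abs_nonneg _) _)]
          rcases lt_or_gt_of_ne h with h' | h'
          · rw [Real.sign_of_neg h']; norm_num
          · rw [Real.sign_of_pos h']; norm_num
        rw [hsabs, ← Real.rpow_mul (abs_nonneg (ws j)), hpq.symm.sub_one_mul_conj]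
    have hSqpos : 0 < Sq := by
      obtain ⟨j0, hj0⟩ := Function.ne_iff.1 hws
      have : (0:ℝ) < |ws j0| ^ q := Real.rpow_pos_of_pos (abs_pos.2 hj0) q
      exact lt_of_lt_of_le this (Finset.single_le_sum
        (fun j _ => Real.rpow_nonneg (abs_nonneg _) q) (Finset.mem_univ j0))
    have hdotws : dotp ws s = Sq := by
      rw [dotp, hSq]; exact Finset.sum_congr rfl fun j _ => hA j
    set T : ℝ := Sq ^ (1/p) with hT
    have hTpos : 0 < T := Real.rpow_pos_of_pos hSqpos _
    have hnorms : lpNorm p s = T := by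
      rw [lpNorm, hT, hSq]
      congr 1
      exact Finset.sum_congr rfl fun j _ => hB j
    -- Sq / T = Nq
    have hSqT : Sq / T = Nq := by
      have h1 : (1:ℝ) - 1/p = 1/q := by
        have h2 := hpq.inv_add_inv_eq_one
        rw [one_div, one_div]
        linarith
      have h3 : Nq = Sq ^ ((1:ℝ)/q) := by rw [hNq, lpNorm, ← hSq]
      rw [h3, hT, ← h1, Real.rpow_sub hSqpos, Real.rpow_one]
    set c : ℝ := ys i * ε / T with hc
    set x' : Fin d → ℝ := xs i - c • s with hx'
    have hyabs : |ys i| = 1 := by rcases hy i with h | h <;> simp [h]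
    have hfeas : lpNorm p (x' - xs i) ≤ ε := by
      have : x' - xs i = (-c) • s := by
        rw [hx']; ext j; simp
      rw [this, lpNorm_smul' hpq.pos, hnorms]
      rw [abs_neg, hc, abs_div, abs_mul, hyabs, one_mul, abs_of_nonneg hε,
        abs_of_pos hTpos]
      rw [div_mul_cancel₀ _ hTpos.ne']
    have hval : ys i * dotp ws x' = ys i * dotp ws (xs i) - ε * Nq := by
      rw [hx', dotp_sub_right, dotp_smul_right, hdotws, hc, ← hSqT]
      have hy2 : ys i * ys i = 1 := by rcases hy i with h | h <;> simp [h]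
      linear_combination (-(ε * Sq / T)) * hy2
    have hmem : (ys i * dotp ws (xs i) - ε * Nq) / R ∈ S := by
      refine ⟨i, x', hfeas, ?_⟩
      rw [hval, hR]
    have hγle : γ ≤ (ys i * dotp ws (xs i) - ε * Nq) / R := by
      rw [hγeq]; exact csInf_le hBdd hmem
    have := (le_div_iff₀ hRpos).1 hγle
    linarith
  -- main argument: for all small t > 0
  have hLw : 0 < L w := by
    rw [hL]
    exact Finset.sum_pos (fun i _ => Real.exp_pos _) hne
  have hstep : ∀ t : ℝ, 0 < t → t * γ * R ≤ 1 →
      dotp g ws ≤ -(γ * R * L w) + t * (γ * R) ^ 2 * L w := by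
    intro t ht ht1
    have hsub := hg (w + t • ws)
    have hz : (w + t • ws) - w = t • ws := by ext j; simp
    rw [hz, dotp_smul_right] at hsub
    -- bound L (w + t • ws)
    have hLbound : L (w + t • ws) ≤ Real.exp (-(t * γ * R)) * L w := by
      rw [hL (w + t • ws), hL w, Finset.mul_sum]
      refine Finset.sum_le_sum fun i _ => ?_
      rw [← Real.exp_add]
      apply Real.exp_le_exp.2
      have hnormb : lpNorm q (w + t • ws) ≤ lpNorm q w + t * Nq := by
        calc lpNorm q (w + t • ws) ≤ lpNorm q w + lpNorm q (t • ws) :=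
              lpNorm_add_le' hpq.symm.lt.le _ _
          _ = lpNorm q w + t * Nq := by
              rw [lpNorm_smul' hpq.symm.pos, abs_of_pos ht, hNq]
      have hdot : dotp (w + t • ws) (xs i) = dotp w (xs i) + t * dotp ws (xs i) := by
        rw [dotp_add_left, dotp_smul_left]
      rw [hdot]
      have hi := hmargin i
      have hyd : -(ys i * (dotp w (xs i) + t * dotp ws (xs i)))
          = -(ys i * dotp w (xs i)) - t * (ys i * dotp ws (xs i)) := by ring
      rw [hyd]
      have h1 : ε * lpNorm q (w + t • ws) ≤ ε * (lpNorm q w + t * Nq) :=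
        mul_le_mul_of_nonneg_left hnormb hε
      nlinarith [hi, ht.le, hε]
    have hexp : Real.exp (-(t * γ * R)) ≤ 1 - t * γ * R + (t * γ * R) ^ 2 := by
      have h0 : 0 ≤ t * γ * R := by positivity
      have := exp_neg_quad (t * γ * R) h0 ht1
      nlinarith [sq_nonneg (t * γ * R)]
    have : L w + t * dotp g ws ≤ (1 - t * γ * R + (t * γ * R) ^ 2) * L w := by
      calc L w + t * dotp g ws ≤ L (w + t • ws) := hsub
        _ ≤ Real.exp (-(t * γ * R)) * L w := hLbound
        _ ≤ (1 - t * γ * R + (t * γ * R) ^ 2) * L w :=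
            mul_le_mul_of_nonneg_right hexp hLw.le
    have h2 : t * dotp g ws ≤ t * (-(γ * R * L w) + t * (γ * R) ^ 2 * L w) := by
      nlinarith
    exact le_of_mul_le_mul_left (by linarith [h2]) ht
  have hkey : dotp g ws ≤ -(γ * R * L w) := by
    apply le_of_forall_pos_le_add
    intro δ hδ
    set C : ℝ := (γ * R) ^ 2 * L w with hC
    have hC0 : 0 ≤ C := by positivity
    set t : ℝ := min (δ / (C + 1)) (1 / (γ * R)) with ht
    have htpos : 0 < t := lt_min (by positivity) (by positivity)
    have ht1 : t * γ * R ≤ 1 := by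
      have : t ≤ 1 / (γ * R) := min_le_right _ _
      have hγR : 0 < γ * R := by positivity
      calc t * γ * R = t * (γ * R) := by ring
        _ ≤ (1 / (γ * R)) * (γ * R) := by
            exact mul_le_mul_of_nonneg_right this hγR.le
        _ = 1 := by field_simp
    have := hstep t htpos ht1
    have htC : t * C ≤ δ := by
      have h1 : t ≤ δ / (C + 1) := min_le_left _ _
      calc t * C ≤ (δ / (C + 1)) * C := mul_le_mul_of_nonneg_right h1 hC0
        _ ≤ δ := by
            rw [div_mul_eq_mul_div, div_le_iff₀ (by linarith)]
            nlinarith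
    calc dotp g ws ≤ -(γ * R * L w) + t * (γ * R) ^ 2 * L w := this
      _ = -(γ * R * L w) + t * C := by rw [hC]; ring
      _ ≤ -(γ * R * L w) + δ := by linarith
  -- conclude with Hölder
  have hhold : dotp g (-ws) ≤ lpNorm rc g * R := by
    have := dotp_le_lpNorm hr.symm g (-ws)
    rwa [lpNorm_neg', ← hR] at this
  have hneg : dotp g (-ws) = -dotp g ws := by simp [dotp]
  have : γ * R * L w ≤ lpNorm rc g * R := by
    rw [hneg] at hhold
    linarith
  have := (mul_le_mul_iff_of_pos_right hRpos).1 (by linarith : (γ * L w) * R ≤ lpNorm rc g * R)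
  linarith
end

section
/- Let L̃(w) = Σ_{i=1}^m exp(−y_i⟨w, x_i⟩ + ε‖w‖_{p*}) and suppose the maximum worst-case ℓ_r margin γ̃ = max_{w≠0} min_i (y_i⟨w,x_i⟩ − ε‖w‖_{p*})/‖w‖_r is positive. If along a trajectory w(t) we have log(1/L̃(w(t))) ≥ γ̃ · ‖w(t) − w₀‖_r for all t and ‖w(t)‖_r → ∞, then liminf_{t→∞} min_i (y_i⟨w(t), x_i⟩ − ε‖w(t)‖_{p*})/‖w(t)‖_r ≥ γ̃, and hence the normalized robust margin converges to the maximum robust margin γ̃. -/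
/-- If along a trajectory `log(1/L̃(w t)) ≥ γ̃·‖w t − w 0‖_r` and `‖w t‖_r → ∞`,
then the normalized robust margin converges to the maximum robust margin `γ̃`. -/
theorem margin_convergence {d m : ℕ} (hm : 0 < m)
    (p q r : ℝ) (hpq : p.HolderConjugate q) (hr : 1 ≤ r)
    (xs : Fin m → Fin d → ℝ) (ys : Fin m → ℝ) (hy : ∀ i, ys i = 1 ∨ ys i = -1)
    (ε : ℝ) (hε : 0 ≤ ε)
    (L : (Fin d → ℝ) → ℝ)
    (hL : ∀ w, L w = ∑ i, Real.exp (-(ys i * dotp w (xs i)) + ε * lpNorm q w))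
    (γ : ℝ) (hγpos : 0 < γ)
    (hγ : IsGreatest {g : ℝ | ∃ u : Fin d → ℝ, u ≠ 0 ∧
        g = sInf {v : ℝ | ∃ i : Fin m,
          v = (ys i * dotp u (xs i) - ε * lpNorm q u) / lpNorm r u}} γ)
    (w : ℝ → Fin d → ℝ)
    (h1 : ∀ t : ℝ, γ * lpNorm r (w t - w 0) ≤ Real.log (1 / L (w t)))
    (h2 : Filter.Tendsto (fun t : ℝ => lpNorm r (w t)) Filter.atTop Filter.atTop) :
    γ ≤ Filter.liminf (fun t : ℝ => sInf {v : ℝ | ∃ i : Fin m,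
        v = (ys i * dotp (w t) (xs i) - ε * lpNorm q (w t)) / lpNorm r (w t)})
      Filter.atTop ∧
    Filter.Tendsto (fun t : ℝ => sInf {v : ℝ | ∃ i : Fin m,
        v = (ys i * dotp (w t) (xs i) - ε * lpNorm q (w t)) / lpNorm r (w t)})
      Filter.atTop (nhds γ) := by
  have hrpos : (0:ℝ) < r := lt_of_lt_of_le zero_lt_one hr
  set f : ℝ → ℝ := fun t : ℝ => sInf {v : ℝ | ∃ i : Fin m,
        v = (ys i * dotp (w t) (xs i) - ε * lpNorm q (w t)) / lpNorm r (w t)} with hf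
  set c : ℝ := lpNorm r (w 0) with hc
  -- Minkowski / reverse triangle inequality
  have htri : ∀ t : ℝ, lpNorm r (w t) - c ≤ lpNorm r (w t - w 0) := by
    intro t
    have h := Real.Lp_add_le Finset.univ (fun j => (w t - w 0) j) (fun j => w 0 j) hr
    have hwt : lpNorm r (w t) ≤ lpNorm r (w t - w 0) + lpNorm r (w 0) := by
      simpa [lpNorm, sub_add_cancel] using h
    simp only [hc]
    linarith
  -- L is positive
  have hLpos : ∀ t, 0 < L (w t) := by
    intro t
    rw [hL]
    exact Finset.sum_pos (fun i _ => Real.exp_pos _) ⟨⟨0, hm⟩, Finset.mem_univ _⟩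
  -- log(1/L(w t)) ≤ each margin term
  have hlog : ∀ t (i : Fin m),
      Real.log (1 / L (w t)) ≤ ys i * dotp (w t) (xs i) - ε * lpNorm q (w t) := by
    intro t i
    have hterm : Real.exp (-(ys i * dotp (w t) (xs i) - ε * lpNorm q (w t))) ≤ L (w t) := by
      rw [hL]
      have : -(ys i * dotp (w t) (xs i) - ε * lpNorm q (w t))
          = -(ys i * dotp (w t) (xs i)) + ε * lpNorm q (w t) := by ring
      rw [this]
      exact Finset.single_le_sum
        (f := fun j => Real.exp (-(ys j * dotp (w t) (xs j)) + ε * lpNorm q (w t)))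
        (fun j _ => (Real.exp_pos _).le) (Finset.mem_univ i)
    have := Real.log_le_log (Real.exp_pos _) hterm
    rw [Real.log_exp] at this
    rw [one_div, Real.log_inv]
    linarith
  -- eventually lpNorm r (w t) ≥ 1
  have hev : ∀ᶠ t in Filter.atTop, 1 ≤ lpNorm r (w t) := h2.eventually_ge_atTop 1
  -- lower bound eventually
  have hlb : ∀ᶠ t in Filter.atTop, γ - γ * c / lpNorm r (w t) ≤ f t := by
    filter_upwards [hev] with t ht
    have hNpos : (0:ℝ) < lpNorm r (w t) := lt_of_lt_of_le zero_lt_one ht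
    refine le_csInf ⟨(ys ⟨0, hm⟩ * dotp (w t) (xs ⟨0, hm⟩) - ε * lpNorm q (w t)) /
        lpNorm r (w t), ⟨0, hm⟩, rfl⟩ ?_
    rintro v ⟨i, rfl⟩
    have h3 : γ * (lpNorm r (w t) - c) ≤ ys i * dotp (w t) (xs i) - ε * lpNorm q (w t) := by
      have := h1 t
      have := hlog t i
      have := mul_le_mul_of_nonneg_left (htri t) hγpos.le
      linarith
    calc γ - γ * c / lpNorm r (w t) = γ * (lpNorm r (w t) - c) / lpNorm r (w t) := by
          field_simp
      _ ≤ _ := (div_le_div_iff_of_pos_right hNpos).mpr h3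
  -- upper bound eventually
  have hub : ∀ᶠ t in Filter.atTop, f t ≤ γ := by
    filter_upwards [hev] with t ht
    have hne : w t ≠ 0 := by
      intro h0
      rw [h0] at ht
      have : lpNorm r (0 : Fin d → ℝ) = 0 := by
        simp [lpNorm, Real.zero_rpow hrpos.ne', Real.zero_rpow (one_div_ne_zero hrpos.ne'),
          Real.zero_rpow (inv_ne_zero hrpos.ne')]
      rw [this] at ht; linarith
    exact hγ.2 ⟨w t, hne, rfl⟩
  -- the lower bound tends to γ
  have hlim : Filter.Tendsto (fun t => γ - γ * c / lpNorm r (w t)) Filter.atTop (nhds γ) := by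
    have : Filter.Tendsto (fun t => γ * c / lpNorm r (w t)) Filter.atTop (nhds 0) :=
      Filter.Tendsto.div_atTop tendsto_const_nhds h2
    simpa using tendsto_const_nhds.sub this
  have htend : Filter.Tendsto f Filter.atTop (nhds γ) :=
    tendsto_of_tendsto_of_tendsto_of_le_of_le' hlim tendsto_const_nhds hlb hub
  exact ⟨le_of_eq htend.liminf_eq.symm, htend⟩
end
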